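/- Let P be a column-stochastic primitive n×n matrix with y[t] = P^t 1 having positive entries, Q[t] = diag(y[t+1])^{-1} P diag(y[t]), and Φ(t,0) = Q[t]⋯Q[0]. Then lim_{t→∞} Φ(t,0) = (1/n) 1 1^T. -/

import Mathlib

open Matrix Finset Filter

/-- `Phi Q s k` is the product `Q (s+k) * Q (s+k-1) * ⋯ * Q s`, i.e. `Φ(s+k, s)`. -/
lemma pow_colsum {n : ℕ} (P : Matrix (Fin n) (Fin n) ℝ)
    (hcol : ∀ j, ∑ i, P i j = 1) (k : ℕ) (j : Fin n) : ∑ i, (P ^ k) i j = 1 := by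
  induction k generalizing j with
  | zero => simp [Matrix.one_apply, Finset.sum_ite_eq]
  | succ k ih =>
    rw [pow_succ]
    simp only [Matrix.mul_apply]
    rw [Finset.sum_comm]
    calc ∑ m, ∑ i, (P ^ k) i m * P m j = ∑ m, (∑ i, (P ^ k) i m) * P m j := by
          simp [Finset.sum_mul]
      _ = ∑ m, P m j := by
          refine Finset.sum_congr rfl fun m _ => by rw [ih m, one_mul]
      _ = 1 := hcol j

lemma conv_upper {n : ℕ} [NeZero n] (B : Matrix (Fin n) (Fin n) ℝ)
    (hB : ∀ i j, 0 ≤ B i j) (hBc : ∀ j, ∑ i, B i j = 1) (x : Fin n → ℝ) (j : Fin n) :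
    ∑ m, x m * B m j ≤ univ.sup' univ_nonempty x := by
  calc ∑ m, x m * B m j ≤ ∑ m, (univ.sup' univ_nonempty x) * B m j :=
        Finset.sum_le_sum fun m _ => mul_le_mul_of_nonneg_right (Finset.le_sup' x (mem_univ m)) (hB m j)
    _ = univ.sup' univ_nonempty x := by rw [← Finset.mul_sum, hBc, mul_one]

lemma conv_lower {n : ℕ} [NeZero n] (B : Matrix (Fin n) (Fin n) ℝ)
    (hB : ∀ i j, 0 ≤ B i j) (hBc : ∀ j, ∑ i, B i j = 1) (x : Fin n → ℝ) (j : Fin n) :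
    univ.inf' univ_nonempty x ≤ ∑ m, x m * B m j := by
  calc univ.inf' univ_nonempty x = ∑ m, (univ.inf' univ_nonempty x) * B m j := by
        rw [← Finset.mul_sum, hBc, mul_one]
    _ ≤ ∑ m, x m * B m j :=
        Finset.sum_le_sum fun m _ => mul_le_mul_of_nonneg_right (Finset.inf'_le x (mem_univ m)) (hB m j)

lemma conv_contract {n : ℕ} [NeZero n] (B : Matrix (Fin n) (Fin n) ℝ)
    (hB : ∀ i j, 0 ≤ B i j) (hBc : ∀ j, ∑ i, B i j = 1) (δ : ℝ) (hδ : ∀ i j, δ ≤ B i j)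
    (x : Fin n → ℝ) (j : Fin n) :
    ∑ m, x m * B m j ≤ univ.sup' univ_nonempty x
      - δ * (univ.sup' univ_nonempty x - univ.inf' univ_nonempty x) := by
  obtain ⟨m0, -, hm0⟩ := Finset.exists_mem_eq_inf' (univ_nonempty (α := Fin n)) x
  set S := univ.sup' univ_nonempty x with hS
  set I := univ.inf' univ_nonempty x with hI
  have hIS : I ≤ S := hm0 ▸ Finset.le_sup' x (mem_univ m0)
  have hsplit : ∑ m, x m * B m j = x m0 * B m0 j + ∑ m ∈ univ.erase m0, x m * B m j :=
    (Finset.add_sum_erase univ _ (mem_univ m0)).symm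
  have hBsplit : ∑ m ∈ univ.erase m0, B m j = 1 - B m0 j := by
    have := Finset.add_sum_erase univ (fun m => B m j) (mem_univ m0)
    rw [hBc j] at this; linarith
  have h2 : ∑ m ∈ univ.erase m0, x m * B m j ≤ S * (1 - B m0 j) := by
    rw [← hBsplit, Finset.mul_sum]
    exact Finset.sum_le_sum fun m _ => mul_le_mul_of_nonneg_right (Finset.le_sup' x (mem_univ m)) (hB m j)
  have hx0 : x m0 = I := hm0.symm
  have hδ0 : δ ≤ B m0 j := hδ m0 j
  have key : x m0 * B m0 j + S * (1 - B m0 j) = S - B m0 j * (S - I) := by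
    rw [hx0]; ring
  have h3 : B m0 j * (S - I) ≥ δ * (S - I) :=
    mul_le_mul_of_nonneg_right hδ0 (sub_nonneg.2 hIS)
  have h4 : x m0 * B m0 j ≤ x m0 * B m0 j := le_refl _
  linarith [hsplit, h2, key, h3]

lemma rowLimit {n : ℕ} [NeZero n] (P : Matrix (Fin n) (Fin n) ℝ)
    (hnonneg : ∀ i j, 0 ≤ P i j) (hcol : ∀ j, ∑ i, P i j = 1)
    (k : ℕ) (hk : 1 ≤ k) (hpos : ∀ i j, 0 < (P ^ k) i j) (i : Fin n) :
    ∃ L : ℝ, 0 < L ∧ ∀ j, Filter.Tendsto (fun t => (P ^ t) i j) Filter.atTop (nhds L) := by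
  have hpownn : ∀ s (a b : Fin n), 0 ≤ (P ^ s) a b := by
    intro s
    induction s with
    | zero => intro a b; by_cases h : a = b <;> simp [Matrix.one_apply, h]
    | succ s ih =>
      intro a b
      rw [pow_succ, Matrix.mul_apply]
      exact Finset.sum_nonneg fun m _ => mul_nonneg (ih a m) (hnonneg m b)
  set a : ℕ → Fin n → ℝ := fun t j => (P ^ t) i j with ha
  have hstep : ∀ t s j, a (t + s) j = ∑ m, a t m * (P ^ s) m j := by
    intro t s j
    simp only [ha, pow_add, Matrix.mul_apply]
  set F : ℕ → ℝ := fun t => univ.sup' univ_nonempty (a t) with hF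
  set G : ℕ → ℝ := fun t => univ.inf' univ_nonempty (a t) with hG
  have hGF : ∀ t, G t ≤ F t := fun t =>
    le_trans (Finset.inf'_le (a t) (mem_univ (Classical.arbitrary (Fin n))))
      (Finset.le_sup' (a t) (mem_univ _))
  have hFanti : Antitone F := by
    apply antitone_nat_of_succ_le
    intro t
    apply Finset.sup'_le
    intro j _
    rw [hstep t 1 j]
    simp only [pow_one]
    exact conv_upper P hnonneg hcol (a t) j
  have hGmono : Monotone G := by
    apply monotone_nat_of_le_succ
    intro t
    apply Finset.le_inf'
    intro j _
    rw [hstep t 1 j]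
    simp only [pow_one]
    exact conv_lower P hnonneg hcol (a t) j
  -- δ
  set δ : ℝ := univ.inf' univ_nonempty (fun p : Fin n => univ.inf' univ_nonempty (fun q => (P ^ k) p q)) with hδdef
  have hδle : ∀ p q, δ ≤ (P ^ k) p q := fun p q =>
    le_trans (Finset.inf'_le _ (mem_univ p)) (Finset.inf'_le _ (mem_univ q))
  have hδpos : 0 < δ := by
    rw [hδdef]
    apply Finset.lt_inf'_iff _ |>.mpr
    intro p _
    exact (Finset.lt_inf'_iff _).mpr fun q _ => hpos p q
  have hδ1 : δ ≤ 1 := by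
    have h1 := hδle (Classical.arbitrary (Fin n)) (Classical.arbitrary (Fin n))
    have h2 : (P ^ k) (Classical.arbitrary (Fin n)) (Classical.arbitrary (Fin n)) ≤ 1 := by
      rw [← pow_colsum P hcol k (Classical.arbitrary (Fin n))]
      exact Finset.single_le_sum (fun m _ => hpownn k m _) (mem_univ _)
    linarith
  -- contraction
  have hcontr : ∀ t, F (t + k) - G (t + k) ≤ (1 - δ) * (F t - G t) := by
    intro t
    have hFk : F (t + k) ≤ F t - δ * (F t - G t) := by
      apply Finset.sup'_le
      intro j _
      rw [hstep t k j]
      exact conv_contract (P ^ k) (hpownn k) (pow_colsum P hcol k) δ hδle (a t) j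
    have hGk : G t ≤ G (t + k) := hGmono (Nat.le_add_right t k)
    nlinarith [hGF t]
  -- convergence of F and G
  have hbddF : BddBelow (Set.range F) := ⟨G 0, by rintro _ ⟨t, rfl⟩; exact le_trans (hGmono (Nat.zero_le t)) (hGF t)⟩
  have hbddG : BddAbove (Set.range G) := ⟨F 0, by rintro _ ⟨t, rfl⟩; exact le_trans (hGF t) (hFanti (Nat.zero_le t))⟩
  have hFlim : Filter.Tendsto F Filter.atTop (nhds (⨅ t, F t)) := tendsto_atTop_ciInf hFanti hbddF
  have hGlim : Filter.Tendsto G Filter.atTop (nhds (⨆ t, G t)) := tendsto_atTop_ciSup hGmono hbddG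
  set L : ℝ := ⨅ t, F t with hL
  set M : ℝ := ⨆ t, G t with hM
  have hML : M ≤ L := by
    refine le_of_tendsto_of_tendsto' hGlim hFlim fun t => hGF t
  have hr0 : 0 ≤ 1 - δ := by linarith
  have hDgeo : ∀ m : ℕ, F (m * k) - G (m * k) ≤ (1 - δ) ^ m * (F 0 - G 0) := by
    intro m
    induction m with
    | zero => simp
    | succ m ih =>
      have : (m + 1) * k = m * k + k := by ring
      rw [this, pow_succ]
      calc F (m * k + k) - G (m * k + k) ≤ (1 - δ) * (F (m * k) - G (m * k)) := hcontr (m * k)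
        _ ≤ (1 - δ) * ((1 - δ) ^ m * (F 0 - G 0)) := mul_le_mul_of_nonneg_left ih hr0
        _ = (1 - δ) ^ m * (1 - δ) * (F 0 - G 0) := by ring
  have hgeo0 : Filter.Tendsto (fun m : ℕ => (1 - δ) ^ m * (F 0 - G 0)) Filter.atTop (nhds 0) := by
    rw [show (0 : ℝ) = 0 * (F 0 - G 0) by ring]
    exact (tendsto_pow_atTop_nhds_zero_of_lt_one hr0 (by linarith)).mul tendsto_const_nhds
  have hsub : Filter.Tendsto (fun m : ℕ => F (m * k) - G (m * k)) Filter.atTop (nhds (L - M)) := by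
    have hmk : Filter.Tendsto (fun m : ℕ => m * k) Filter.atTop Filter.atTop := by
      apply Filter.tendsto_atTop_mono (f := fun m : ℕ => m)
      · intro m; exact Nat.le_mul_of_pos_right m hk
      · exact Filter.tendsto_id
    exact ((hFlim.comp hmk).sub (hGlim.comp hmk))
  have hLM2 : L - M ≤ 0 := le_of_tendsto_of_tendsto' hsub hgeo0 hDgeo
  have hLM : L = M := le_antisymm (by linarith) hML
  refine ⟨L, ?_, ?_⟩
  · -- positivity: L = M ≥ G k ≥ δ > 0
    have hGk : δ ≤ G k := Finset.le_inf' _ _ fun j _ => by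
      have := hstep 0 k j
      simpa [ha] using hδle i j
    have : G k ≤ M := le_ciSup hbddG k
    linarith
  · intro j
    have hup : ∀ t, a t j ≤ F t := fun t => Finset.le_sup' (a t) (mem_univ j)
    have hlo : ∀ t, G t ≤ a t j := fun t => Finset.inf'_le (a t) (mem_univ j)
    have hGlim' : Filter.Tendsto G Filter.atTop (nhds L) := hLM ▸ hGlim
    exact tendsto_of_tendsto_of_tendsto_of_le_of_le hGlim' hFlim hlo hup

def Phi {n : ℕ} (Q : ℕ → Matrix (Fin n) (Fin n) ℝ) (s : ℕ) : ℕ → Matrix (Fin n) (Fin n) ℝ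
  | 0 => Q s
  | k + 1 => Q (s + k + 1) * Phi Q s k

theorem stmt_3 {n : ℕ} (P : Matrix (Fin n) (Fin n) ℝ)
    (hnonneg : ∀ i j, 0 ≤ P i j)
    (hcol : ∀ j, ∑ i, P i j = 1)
    (hprim : ∃ k : ℕ, ∀ i j, 0 < (P ^ k) i j)
    (y : ℕ → Fin n → ℝ)
    (hy : ∀ t, y t = (P ^ t) *ᵥ (fun _ => (1 : ℝ)))
    (hypos : ∀ t i, 0 < y t i)
    (Q : ℕ → Matrix (Fin n) (Fin n) ℝ)
    (hQ : ∀ t, Q t = Matrix.diagonal (fun i => (y (t + 1) i)⁻¹) * P * Matrix.diagonal (y t)) :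
    Tendsto (fun t => Phi Q 0 t) atTop
      (nhds (Matrix.of fun _ _ => (1 : ℝ) / n)) := by
  rcases Nat.eq_zero_or_pos n with hn | hn
  · subst hn
    have : (fun t => Phi Q 0 t)
        = fun _ => (Matrix.of fun _ _ => (1 : ℝ) / ((0 : ℕ) : ℝ) : Matrix (Fin 0) (Fin 0) ℝ) :=
      funext fun t => Subsingleton.elim _ _
    rw [this]
    exact tendsto_const_nhds
  haveI : NeZero n := ⟨hn.ne'⟩
  -- upgrade primitivity to exponent k + 1 ≥ 1
  obtain ⟨k, hk⟩ := hprim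
  have hpownn : ∀ s (a b : Fin n), 0 ≤ (P ^ s) a b := by
    intro s
    induction s with
    | zero => intro a b; by_cases h : a = b <;> simp [Matrix.one_apply, h]
    | succ s ih =>
      intro a b
      rw [pow_succ, Matrix.mul_apply]
      exact Finset.sum_nonneg fun m _ => mul_nonneg (ih a m) (hnonneg m b)
  have hk1 : ∀ i j, 0 < (P ^ (k + 1)) i j := by
    intro i j
    rw [pow_succ, Matrix.mul_apply]
    have hexists : ∃ m, 0 < P m j := by
      by_contra h
      push_neg at h
      have : ∑ m, P m j = 0 :=
        Finset.sum_eq_zero fun m _ => le_antisymm (h m) (hnonneg m j)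
      rw [hcol j] at this; norm_num at this
    obtain ⟨m, hm⟩ := hexists
    refine Finset.sum_pos' (fun m' _ => mul_nonneg (hpownn k i m') (hnonneg m' j)) ⟨m, mem_univ m, ?_⟩
    exact mul_pos (hk i m) hm
  choose L hLpos hL using fun i =>
    rowLimit P hnonneg hcol (k + 1) (Nat.succ_le_succ (Nat.zero_le k)) hk1 i
  -- Phi formula
  have hy0 : Matrix.diagonal (y 0) = 1 := by
    rw [hy 0, pow_zero, Matrix.one_mulVec, Matrix.diagonal_one]
  have hPhi : ∀ t, Phi Q 0 t = Matrix.diagonal (fun i => (y (t + 1) i)⁻¹) * P ^ (t + 1) := by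
    intro t
    induction t with
    | zero =>
      show Q 0 = _
      rw [hQ 0, hy0, mul_one, pow_one]
    | succ t ih =>
      show Q (0 + t + 1) * Phi Q 0 t = _
      rw [ih, hQ (0 + t + 1)]
      have harith : 0 + t + 1 = t + 1 := by ring
      rw [harith]
      have hdiag : Matrix.diagonal (y (t + 1)) * Matrix.diagonal (fun i => (y (t + 1) i)⁻¹)
          = (1 : Matrix (Fin n) (Fin n) ℝ) := by
        rw [Matrix.diagonal_mul_diagonal]
        rw [show (fun i => y (t + 1) i * (y (t + 1) i)⁻¹) = fun _ => (1 : ℝ) from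
          funext fun i => mul_inv_cancel₀ (hypos (t + 1) i).ne']
        exact Matrix.diagonal_one
      calc Matrix.diagonal (fun i => (y (t + 1 + 1) i)⁻¹) * P * Matrix.diagonal (y (t + 1))
            * (Matrix.diagonal (fun i => (y (t + 1) i)⁻¹) * P ^ (t + 1))
          = Matrix.diagonal (fun i => (y (t + 1 + 1) i)⁻¹) * P
            * ((Matrix.diagonal (y (t + 1)) * Matrix.diagonal (fun i => (y (t + 1) i)⁻¹))
              * P ^ (t + 1)) := by
            simp only [mul_assoc]
        _ = Matrix.diagonal (fun i => (y (t + 1 + 1) i)⁻¹) * (P * P ^ (t + 1)) := by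
            rw [hdiag, one_mul, mul_assoc]
        _ = Matrix.diagonal (fun i => (y (t + 1 + 1) i)⁻¹) * P ^ (t + 1 + 1) := by
            rw [← pow_succ']
  -- entrywise convergence
  refine tendsto_pi_nhds.mpr ?_
  intro i
  rw [tendsto_pi_nhds]
  intro j
  have hentry : ∀ t, Phi Q 0 t i j = (y (t + 1) i)⁻¹ * (P ^ (t + 1)) i j := by
    intro t
    rw [hPhi t]
    simp [Matrix.mul_apply, Matrix.diagonal_apply, ite_mul, Finset.sum_ite_eq]
  have hyform : ∀ t i', y t i' = ∑ j', (P ^ t) i' j' := by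
    intro t i'
    rw [hy t]
    simp [Matrix.mulVec, dotProduct]
  have hshift : ∀ j', Tendsto (fun t => (P ^ (t + 1)) i j') atTop (nhds (L i)) := by
    intro j'
    exact (hL i j').comp (tendsto_add_atTop_nat 1)
  have hylim : Tendsto (fun t => y (t + 1) i) atTop (nhds ((n : ℝ) * L i)) := by
    have hform : (fun t => y (t + 1) i) = fun t => ∑ j', (P ^ (t + 1)) i j' :=
      funext fun t => hyform (t + 1) i
    rw [hform]
    have := tendsto_finset_sum (univ : Finset (Fin n))
      (fun j' _ => hshift j')
    simpa [Finset.sum_const, Finset.card_univ, nsmul_eq_mul] using this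
  have hnL : (n : ℝ) * L i ≠ 0 := by
    exact mul_ne_zero (by exact_mod_cast hn.ne') (hLpos i).ne'
  have hinv : Tendsto (fun t => (y (t + 1) i)⁻¹) atTop (nhds (((n : ℝ) * L i)⁻¹)) :=
    hylim.inv₀ hnL
  have hmul := hinv.mul (hshift j)
  have hval : ((n : ℝ) * L i)⁻¹ * L i = 1 / n := by
    field_simp [(hLpos i).ne']
  rw [hval] at hmul
  have hfun : (fun t => Phi Q 0 t i j) = fun t => (y (t + 1) i)⁻¹ * (P ^ (t + 1)) i j :=
    funext hentry
  rw [show (Matrix.of fun _ _ => (1 : ℝ) / n) i j = 1 / (n : ℝ) from rfl, hfun]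
  exact hmul
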